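/- Let R be the pullback of two DVRs over a common residue field, let 0 → K → S → M → 0 be a separated representation of a non-separated R-module M. Then M is a pseudo-absorbing primary multiplication R-module if and only if S is a pseudo-absorbing primary multiplication R-module. -/

import Mathlib

set_option linter.unusedSectionVars false
set_option maxHeartbeats 1000000


/-- A proper ideal `I` is 2-absorbing primary if `a*b*c ∈ I` implies
`a*b ∈ I` or `a*c ∈ √I` or `b*c ∈ √I`. -/
def IsTwoAbsPrimary {R : Type*} [CommRing R] (I : Ideal R) : Prop :=
  I ≠ ⊤ ∧ ∀ a b c : R, a * b * c ∈ I → a * b ∈ I ∨ a * c ∈ I.radical ∨ b * c ∈ I.radical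

/-- A proper submodule `N` of `M` is pseudo-absorbing primary if `(N :_R M)`
is a 2-absorbing primary ideal of `R`. -/
def IsPseudoAbsPrimary {R M : Type*} [CommRing R] [AddCommGroup M] [Module R M]
    (N : Submodule R M) : Prop :=
  N ≠ ⊤ ∧ IsTwoAbsPrimary (N.colon ⊤)

/-- `M` is a pseudo-absorbing primary multiplication module if every
pseudo-absorbing primary submodule `N` satisfies `N = I • M` for some ideal `I`. -/
def IsPAPMultiplication (R M : Type*) [CommRing R] [AddCommGroup M] [Module R M] : Prop :=
  ∀ N : Submodule R M, IsPseudoAbsPrimary N → ∃ I : Ideal R, N = I • (⊤ : Submodule R M)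

/-- The pullback ring `R = {(r,s) : v₁ r = v₂ s}` of two rings over a common quotient. -/
def pullbackRing {R₁ R₂ k : Type*} [CommRing R₁] [CommRing R₂] [CommRing k]
    (v₁ : R₁ →+* k) (v₂ : R₂ →+* k) : Subring (R₁ × R₂) :=
  RingHom.eqLocus (v₁.comp (RingHom.fst R₁ R₂)) (v₂.comp (RingHom.snd R₁ R₂))

/-- The ideal `I ⊕ J` of the pullback ring, i.e. the trace on the pullback of the
product ideal `I × J` of `R₁ × R₂`. -/
def pbIdeal {R₁ R₂ k : Type*} [CommRing R₁] [CommRing R₂] [CommRing k]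
    (v₁ : R₁ →+* k) (v₂ : R₂ →+* k) (I : Ideal R₁) (J : Ideal R₂) :
    Ideal (pullbackRing v₁ v₂) :=
  Ideal.comap (pullbackRing v₁ v₂).subtype (I.prod J)

section Aux

variable {R₁ R₂ k : Type*} [CommRing R₁] [CommRing R₂] [Field k]
    {v₁ : R₁ →+* k} {v₂ : R₂ →+* k}

lemma mem_pbIdeal_iff {I : Ideal R₁} {J : Ideal R₂} {x : ↥(pullbackRing v₁ v₂)} :
    x ∈ pbIdeal v₁ v₂ I J ↔ (x : R₁ × R₂).1 ∈ I ∧ (x : R₁ × R₂).2 ∈ J := by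
  rw [pbIdeal, Ideal.mem_comap]
  exact Iff.rfl

lemma pb_val_eq (x : ↥(pullbackRing v₁ v₂)) : v₁ (x : R₁ × R₂).1 = v₂ (x : R₁ × R₂).2 :=
  x.property

lemma pb_mul_fst (x y : ↥(pullbackRing v₁ v₂)) :
    ((x * y : ↥(pullbackRing v₁ v₂)) : R₁ × R₂).1 = (x : R₁ × R₂).1 * (y : R₁ × R₂).1 := rfl

lemma pb_mul_snd (x y : ↥(pullbackRing v₁ v₂)) :
    ((x * y : ↥(pullbackRing v₁ v₂)) : R₁ × R₂).2 = (x : R₁ × R₂).2 * (y : R₁ × R₂).2 := rfl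

lemma isUnit_pb {x : ↥(pullbackRing v₁ v₂)} (h₁ : IsUnit (x : R₁ × R₂).1)
    (h₂ : IsUnit (x : R₁ × R₂).2) : IsUnit x := by
  obtain ⟨u₁, hu₁⟩ := h₁
  obtain ⟨u₂, hu₂⟩ := h₂
  have hmem : v₁ ((u₁⁻¹ : R₁ˣ) : R₁) = v₂ ((u₂⁻¹ : R₂ˣ) : R₂) := by
    have e1 : v₁ ((u₁⁻¹ : R₁ˣ) : R₁) * v₁ ((u₁ : R₁ˣ) : R₁) = 1 := by
      rw [← map_mul, Units.inv_mul, map_one]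
    have e2 : v₂ ((u₂⁻¹ : R₂ˣ) : R₂) * v₂ ((u₂ : R₂ˣ) : R₂) = 1 := by
      rw [← map_mul, Units.inv_mul, map_one]
    have hx := pb_val_eq x
    rw [← hu₁, ← hu₂] at hx
    rw [eq_inv_of_mul_eq_one_left e1, eq_inv_of_mul_eq_one_left e2, hx]
  refine isUnit_iff_exists_inv.2 ⟨⟨Prod.mk ((u₁⁻¹ : R₁ˣ) : R₁) ((u₂⁻¹ : R₂ˣ) : R₂), hmem⟩, ?_⟩
  apply Subtype.ext
  apply Prod.ext
  · show (x : R₁ × R₂).1 * _ = 1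
    rw [← hu₁, Units.mul_inv]
  · show (x : R₁ × R₂).2 * _ = 1
    rw [← hu₂, Units.mul_inv]

end Aux

section Aux2

variable {R₁ R₂ k : Type*} [CommRing R₁] [CommRing R₂] [Field k]
    [IsDomain R₁] [IsDomain R₂] [IsDiscreteValuationRing R₁] [IsDiscreteValuationRing R₂]
    {v₁ : R₁ →+* k} {v₂ : R₂ →+* k}

lemma isUnit_of_not_mem_P (hk₁ : RingHom.ker v₁ = IsLocalRing.maximalIdeal R₁)
    (hk₂ : RingHom.ker v₂ = IsLocalRing.maximalIdeal R₂) {x : ↥(pullbackRing v₁ v₂)}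
    (hx : x ∉ pbIdeal v₁ v₂ (IsLocalRing.maximalIdeal R₁) (IsLocalRing.maximalIdeal R₂)) :
    IsUnit x := by
  rw [mem_pbIdeal_iff] at hx
  have hiff : (x : R₁ × R₂).1 ∈ IsLocalRing.maximalIdeal R₁ ↔
      (x : R₁ × R₂).2 ∈ IsLocalRing.maximalIdeal R₂ := by
    rw [← hk₁, ← hk₂, RingHom.mem_ker, RingHom.mem_ker, pb_val_eq x]
  have h1 : (x : R₁ × R₂).1 ∉ IsLocalRing.maximalIdeal R₁ := fun h => hx ⟨h, hiff.1 h⟩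
  have h2 : (x : R₁ × R₂).2 ∉ IsLocalRing.maximalIdeal R₂ := fun h => hx ⟨hiff.2 h, h⟩
  apply isUnit_pb
  · by_contra hu; exact h1 ((IsLocalRing.mem_maximalIdeal _).2 (mem_nonunits_iff.2 hu))
  · by_contra hu; exact h2 ((IsLocalRing.mem_maximalIdeal _).2 (mem_nonunits_iff.2 hu))

lemma ideal_le_P (hk₁ : RingHom.ker v₁ = IsLocalRing.maximalIdeal R₁)
    (hk₂ : RingHom.ker v₂ = IsLocalRing.maximalIdeal R₂)
    {I : Ideal ↥(pullbackRing v₁ v₂)} (hI : I ≠ ⊤) :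
    I ≤ pbIdeal v₁ v₂ (IsLocalRing.maximalIdeal R₁) (IsLocalRing.maximalIdeal R₂) := by
  intro x hx
  by_contra h
  exact hI (I.eq_top_of_isUnit_mem hx (isUnit_of_not_mem_P hk₁ hk₂ h))

lemma exists_pi1 (hk₁ : RingHom.ker v₁ = IsLocalRing.maximalIdeal R₁) :
    ∃ (p₁ : R₁) (π₁ : ↥(pullbackRing v₁ v₂)),
      Irreducible p₁ ∧ (π₁ : R₁ × R₂) = (p₁, 0) := by
  obtain ⟨p₁, hp₁⟩ := IsDiscreteValuationRing.exists_irreducible R₁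
  have h0 : v₁ p₁ = 0 := by
    rw [← RingHom.mem_ker, hk₁]
    exact (IsLocalRing.mem_maximalIdeal _).2 (mem_nonunits_iff.2 hp₁.not_isUnit)
  refine ⟨p₁, ⟨(p₁, 0), ?_⟩, hp₁, rfl⟩
  show v₁ p₁ = v₂ 0
  rw [map_zero, h0]

lemma exists_pi2 (hk₂ : RingHom.ker v₂ = IsLocalRing.maximalIdeal R₂) :
    ∃ (p₂ : R₂) (π₂ : ↥(pullbackRing v₁ v₂)),
      Irreducible p₂ ∧ (π₂ : R₁ × R₂) = (0, p₂) := by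
  obtain ⟨p₂, hp₂⟩ := IsDiscreteValuationRing.exists_irreducible R₂
  have h0 : v₂ p₂ = 0 := by
    rw [← RingHom.mem_ker, hk₂]
    exact (IsLocalRing.mem_maximalIdeal _).2 (mem_nonunits_iff.2 hp₂.not_isUnit)
  refine ⟨p₂, ⟨(0, p₂), ?_⟩, hp₂, rfl⟩
  show v₁ 0 = v₂ p₂
  rw [map_zero, h0]

lemma P1_eq_span (hv₂ : Function.Surjective v₂) {p₁ : R₁} (hp₁ : Irreducible p₁)
    {π₁ : ↥(pullbackRing v₁ v₂)} (hπ : (π₁ : R₁ × R₂) = (p₁, 0)) :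
    pbIdeal v₁ v₂ (IsLocalRing.maximalIdeal R₁) ⊥ = Ideal.span {π₁} := by
  apply le_antisymm
  · intro x hx
    rw [mem_pbIdeal_iff] at hx
    obtain ⟨hx1, hx2⟩ := hx
    rw [Ideal.mem_bot] at hx2
    rw [hp₁.maximalIdeal_eq, Ideal.mem_span_singleton'] at hx1
    obtain ⟨c, hc⟩ := hx1
    obtain ⟨c₂, hc₂⟩ := hv₂ (v₁ c)
    refine Ideal.mem_span_singleton'.2 ⟨⟨(c, c₂), hc₂.symm⟩, ?_⟩
    apply Subtype.ext; apply Prod.ext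
    · show c * (π₁ : R₁ × R₂).1 = _
      rw [hπ]; exact hc
    · show c₂ * (π₁ : R₁ × R₂).2 = _
      rw [hπ, hx2]; simp
  · rw [Ideal.span_le, Set.singleton_subset_iff, SetLike.mem_coe, mem_pbIdeal_iff, hπ]
    exact ⟨(IsLocalRing.mem_maximalIdeal _).2 (mem_nonunits_iff.2 hp₁.not_isUnit), Ideal.zero_mem ⊥⟩

lemma P2_eq_span (hv₁ : Function.Surjective v₁) {p₂ : R₂} (hp₂ : Irreducible p₂)
    {π₂ : ↥(pullbackRing v₁ v₂)} (hπ : (π₂ : R₁ × R₂) = (0, p₂)) :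
    pbIdeal v₁ v₂ ⊥ (IsLocalRing.maximalIdeal R₂) = Ideal.span {π₂} := by
  apply le_antisymm
  · intro x hx
    rw [mem_pbIdeal_iff] at hx
    obtain ⟨hx1, hx2⟩ := hx
    rw [Ideal.mem_bot] at hx1
    rw [hp₂.maximalIdeal_eq, Ideal.mem_span_singleton'] at hx2
    obtain ⟨c, hc⟩ := hx2
    obtain ⟨c₁, hc₁⟩ := hv₁ (v₂ c)
    refine Ideal.mem_span_singleton'.2 ⟨⟨(c₁, c), hc₁⟩, ?_⟩
    apply Subtype.ext; apply Prod.ext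
    · show c₁ * (π₂ : R₁ × R₂).1 = _
      rw [hπ, hx1]; simp
    · show c * (π₂ : R₁ × R₂).2 = _
      rw [hπ]; exact hc
  · rw [Ideal.span_le, Set.singleton_subset_iff, SetLike.mem_coe, mem_pbIdeal_iff, hπ]
    exact ⟨Ideal.zero_mem ⊥, (IsLocalRing.mem_maximalIdeal _).2 (mem_nonunits_iff.2 hp₂.not_isUnit)⟩

lemma P_ne_top :
    pbIdeal v₁ v₂ (IsLocalRing.maximalIdeal R₁) (IsLocalRing.maximalIdeal R₂) ≠ ⊤ := by
  rw [Ideal.ne_top_iff_one, mem_pbIdeal_iff]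
  rintro ⟨h1, -⟩
  exact (Ideal.IsMaximal.ne_top inferInstance)
    ((Ideal.eq_top_iff_one (IsLocalRing.maximalIdeal R₁)).2 h1)

lemma P_eq_sup (hk₁ : RingHom.ker v₁ = IsLocalRing.maximalIdeal R₁)
    (hk₂ : RingHom.ker v₂ = IsLocalRing.maximalIdeal R₂) :
    pbIdeal v₁ v₂ (IsLocalRing.maximalIdeal R₁) (IsLocalRing.maximalIdeal R₂) =
      pbIdeal v₁ v₂ (IsLocalRing.maximalIdeal R₁) ⊥ ⊔
      pbIdeal v₁ v₂ ⊥ (IsLocalRing.maximalIdeal R₂) := by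
  apply le_antisymm
  · intro x hx
    rw [mem_pbIdeal_iff] at hx
    have h1 : v₁ (x : R₁ × R₂).1 = 0 := by rw [← RingHom.mem_ker, hk₁]; exact hx.1
    have h2 : v₂ (x : R₁ × R₂).2 = 0 := by rw [← RingHom.mem_ker, hk₂]; exact hx.2
    refine Submodule.mem_sup.2
      ⟨⟨((x : R₁ × R₂).1, 0), show v₁ (x : R₁ × R₂).1 = v₂ (0 : R₂) by rw [map_zero, h1]⟩,
        mem_pbIdeal_iff.2 ⟨hx.1, Ideal.zero_mem ⊥⟩,
        ⟨(0, (x : R₁ × R₂).2), show v₁ (0 : R₁) = v₂ (x : R₁ × R₂).2 by rw [map_zero, h2]⟩,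
        mem_pbIdeal_iff.2 ⟨Ideal.zero_mem ⊥, hx.2⟩, ?_⟩
    apply Subtype.ext; apply Prod.ext <;> simp
  · apply sup_le
    · intro x hx
      rw [mem_pbIdeal_iff] at hx ⊢
      refine ⟨hx.1, ?_⟩
      have : (x : R₁ × R₂).2 = 0 := Ideal.mem_bot.1 hx.2
      rw [this]; exact Ideal.zero_mem _
    · intro x hx
      rw [mem_pbIdeal_iff] at hx ⊢
      refine ⟨?_, hx.2⟩
      have : (x : R₁ × R₂).1 = 0 := Ideal.mem_bot.1 hx.1
      rw [this]; exact Ideal.zero_mem _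


lemma exists_pow_pi2_mem (hv₁ : Function.Surjective v₁)
    {I : Ideal ↥(pullbackRing v₁ v₂)} {p₂ : R₂} (hp₂ : Irreducible p₂)
    {π₂ : ↥(pullbackRing v₁ v₂)} (hπ : (π₂ : R₁ × R₂) = (0, p₂))
    {z : ↥(pullbackRing v₁ v₂)} (hz : z ∈ I) (h2 : (z : R₁ × R₂).2 ≠ 0) :
    ∃ e, 1 ≤ e ∧ π₂ ^ e ∈ I := by
  have hy : z * π₂ ∈ I := I.mul_mem_right _ hz
  have hyv : ((z * π₂ : ↥(pullbackRing v₁ v₂)) : R₁ × R₂) = ((z : R₁ × R₂).1 * 0,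
      (z : R₁ × R₂).2 * p₂) := by
    apply Prod.ext
    · show (z : R₁ × R₂).1 * (π₂ : R₁ × R₂).1 = _
      rw [hπ]
    · show (z : R₁ × R₂).2 * (π₂ : R₁ × R₂).2 = _
      rw [hπ]
  have hne : (z : R₁ × R₂).2 * p₂ ≠ 0 := mul_ne_zero h2 hp₂.ne_zero
  obtain ⟨e, u, hu⟩ := IsDiscreteValuationRing.eq_unit_mul_pow_irreducible hne hp₂
  have hp₂m : p₂ ∈ IsLocalRing.maximalIdeal R₂ :=
    (IsLocalRing.mem_maximalIdeal _).2 (mem_nonunits_iff.2 hp₂.not_isUnit)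
  have he1 : 1 ≤ e := by
    rcases Nat.eq_zero_or_pos e with h0 | h
    · exfalso
      rw [h0, pow_zero, mul_one] at hu
      have hm : ((u : R₂)) ∈ IsLocalRing.maximalIdeal R₂ := by
        rw [← hu]; exact Ideal.mul_mem_left _ _ hp₂m
      exact (mem_nonunits_iff.1 ((IsLocalRing.mem_maximalIdeal _).1 hm)) u.isUnit
    · exact h
  obtain ⟨c₁, hc₁⟩ := hv₁ (v₂ ((u⁻¹ : R₂ˣ) : R₂))
  have key : π₂ ^ e = (⟨(c₁, ((u⁻¹ : R₂ˣ) : R₂)), hc₁⟩ : ↥(pullbackRing v₁ v₂)) * (z * π₂) := by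
    apply Subtype.ext
    have hcoe : ((π₂ ^ e : ↥(pullbackRing v₁ v₂)) : R₁ × R₂) = ((0, p₂) : R₁ × R₂) ^ e := by
      rw [← hπ]; exact SubmonoidClass.coe_pow π₂ e
    apply Prod.ext
    · show _ = c₁ * ((z * π₂ : ↥(pullbackRing v₁ v₂)) : R₁ × R₂).1
      rw [hcoe, hyv, Prod.pow_fst]
      simp [zero_pow (by omega : e ≠ 0)]
    · show _ = ((u⁻¹ : R₂ˣ) : R₂) * ((z * π₂ : ↥(pullbackRing v₁ v₂)) : R₁ × R₂).2
      rw [hcoe, hyv, Prod.pow_snd, hu]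
      simp
  exact ⟨e, he1, key ▸ I.mul_mem_left _ hy⟩

lemma exists_pow_pi1_mem (hv₂ : Function.Surjective v₂)
    {I : Ideal ↥(pullbackRing v₁ v₂)} {p₁ : R₁} (hp₁ : Irreducible p₁)
    {π₁ : ↥(pullbackRing v₁ v₂)} (hπ : (π₁ : R₁ × R₂) = (p₁, 0))
    {z : ↥(pullbackRing v₁ v₂)} (hz : z ∈ I) (h1 : (z : R₁ × R₂).1 ≠ 0) :
    ∃ e, 1 ≤ e ∧ π₁ ^ e ∈ I := by
  have hy : z * π₁ ∈ I := I.mul_mem_right _ hz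
  have hyv : ((z * π₁ : ↥(pullbackRing v₁ v₂)) : R₁ × R₂) = ((z : R₁ × R₂).1 * p₁,
      (z : R₁ × R₂).2 * 0) := by
    apply Prod.ext
    · show (z : R₁ × R₂).1 * (π₁ : R₁ × R₂).1 = _
      rw [hπ]
    · show (z : R₁ × R₂).2 * (π₁ : R₁ × R₂).2 = _
      rw [hπ]
  have hne : (z : R₁ × R₂).1 * p₁ ≠ 0 := mul_ne_zero h1 hp₁.ne_zero
  obtain ⟨e, u, hu⟩ := IsDiscreteValuationRing.eq_unit_mul_pow_irreducible hne hp₁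
  have hp₁m : p₁ ∈ IsLocalRing.maximalIdeal R₁ :=
    (IsLocalRing.mem_maximalIdeal _).2 (mem_nonunits_iff.2 hp₁.not_isUnit)
  have he1 : 1 ≤ e := by
    rcases Nat.eq_zero_or_pos e with h0 | h
    · exfalso
      rw [h0, pow_zero, mul_one] at hu
      have hm : ((u : R₁)) ∈ IsLocalRing.maximalIdeal R₁ := by
        rw [← hu]; exact Ideal.mul_mem_left _ _ hp₁m
      exact (mem_nonunits_iff.1 ((IsLocalRing.mem_maximalIdeal _).1 hm)) u.isUnit
    · exact h
  obtain ⟨c₂, hc₂⟩ := hv₂ (v₁ ((u⁻¹ : R₁ˣ) : R₁))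
  have key : π₁ ^ e = (⟨(((u⁻¹ : R₁ˣ) : R₁), c₂), hc₂.symm⟩ : ↥(pullbackRing v₁ v₂)) * (z * π₁) := by
    apply Subtype.ext
    have hcoe : ((π₁ ^ e : ↥(pullbackRing v₁ v₂)) : R₁ × R₂) = ((p₁, 0) : R₁ × R₂) ^ e := by
      rw [← hπ]; exact SubmonoidClass.coe_pow π₁ e
    apply Prod.ext
    · show _ = ((u⁻¹ : R₁ˣ) : R₁) * ((z * π₁ : ↥(pullbackRing v₁ v₂)) : R₁ × R₂).1
      rw [hcoe, hyv, Prod.pow_fst, hu]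
      simp
    · show _ = c₂ * ((z * π₁ : ↥(pullbackRing v₁ v₂)) : R₁ × R₂).2
      rw [hcoe, hyv, Prod.pow_snd]
      simp [zero_pow (by omega : e ≠ 0)]
  exact ⟨e, he1, key ▸ I.mul_mem_left _ hy⟩

lemma span_le_radical {I : Ideal ↥(pullbackRing v₁ v₂)} {π : ↥(pullbackRing v₁ v₂)} {e : ℕ}
    (he : π ^ e ∈ I) : Ideal.span {π} ≤ I.radical := by
  rw [Ideal.span_le, Set.singleton_subset_iff]
  exact ⟨e, he⟩


lemma mem_P2_of_fst_zero (hk₂ : RingHom.ker v₂ = IsLocalRing.maximalIdeal R₂)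
    {x : ↥(pullbackRing v₁ v₂)} (h : (x : R₁ × R₂).1 = 0) :
    x ∈ pbIdeal v₁ v₂ ⊥ (IsLocalRing.maximalIdeal R₂) := by
  refine mem_pbIdeal_iff.2 ⟨Ideal.mem_bot.2 h, ?_⟩
  rw [← hk₂, RingHom.mem_ker, ← pb_val_eq x, h, map_zero]

lemma mem_P1_of_snd_zero (hk₁ : RingHom.ker v₁ = IsLocalRing.maximalIdeal R₁)
    {x : ↥(pullbackRing v₁ v₂)} (h : (x : R₁ × R₂).2 = 0) :
    x ∈ pbIdeal v₁ v₂ (IsLocalRing.maximalIdeal R₁) ⊥ := by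
  refine mem_pbIdeal_iff.2 ⟨?_, Ideal.mem_bot.2 h⟩
  rw [← hk₁, RingHom.mem_ker, pb_val_eq x, h, map_zero]

lemma isTwoAbsPrimary_of_ne_top (hv₁ : Function.Surjective v₁) (hv₂ : Function.Surjective v₂)
    (hk₁ : RingHom.ker v₁ = IsLocalRing.maximalIdeal R₁)
    (hk₂ : RingHom.ker v₂ = IsLocalRing.maximalIdeal R₂)
    {I : Ideal ↥(pullbackRing v₁ v₂)} (hI : I ≠ ⊤) : IsTwoAbsPrimary I := by
  refine ⟨hI, fun a b c habc => ?_⟩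
  have hIP := ideal_le_P hk₁ hk₂ hI
  have hzI : ∀ x : ↥(pullbackRing v₁ v₂), x = 0 → x ∈ I := fun x h => h ▸ I.zero_mem
  have hzR : ∀ x : ↥(pullbackRing v₁ v₂), x = 0 → x ∈ I.radical := fun x h => h ▸ I.radical.zero_mem
  by_cases hA : ∀ z ∈ I, (z : R₁ × R₂).1 = 0
  · by_cases hB : ∀ z ∈ I, (z : R₁ × R₂).2 = 0
    · have h1 : (a : R₁ × R₂).1 * (b : R₁ × R₂).1 * (c : R₁ × R₂).1 = 0 := hA _ habc
      have h2 : (a : R₁ × R₂).2 * (b : R₁ × R₂).2 * (c : R₁ × R₂).2 = 0 := hB _ habc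
      have hfst : (a : R₁ × R₂).1 = 0 ∨ (b : R₁ × R₂).1 = 0 ∨ (c : R₁ × R₂).1 = 0 := by
        rcases mul_eq_zero.1 h1 with h | h
        · rcases mul_eq_zero.1 h with h' | h'
          · exact Or.inl h'
          · exact Or.inr (Or.inl h')
        · exact Or.inr (Or.inr h)
      have hsnd : (a : R₁ × R₂).2 = 0 ∨ (b : R₁ × R₂).2 = 0 ∨ (c : R₁ × R₂).2 = 0 := by
        rcases mul_eq_zero.1 h2 with h | h
        · rcases mul_eq_zero.1 h with h' | h'
          · exact Or.inl h'
          · exact Or.inr (Or.inl h')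
        · exact Or.inr (Or.inr h)
      rcases hfst with hf | hf | hf <;> rcases hsnd with hs | hs | hs
      · exact Or.inl (hzI _ (Subtype.ext (Prod.ext (by rw [pb_mul_fst, hf, zero_mul]; rfl)
          (by rw [pb_mul_snd, hs, zero_mul]; rfl))))
      · exact Or.inl (hzI _ (Subtype.ext (Prod.ext (by rw [pb_mul_fst, hf, zero_mul]; rfl)
          (by rw [pb_mul_snd, hs, mul_zero]; rfl))))
      · exact Or.inr (Or.inl (hzR _ (Subtype.ext (Prod.ext (by rw [pb_mul_fst, hf, zero_mul]; rfl)
          (by rw [pb_mul_snd, hs, mul_zero]; rfl)))))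
      · exact Or.inl (hzI _ (Subtype.ext (Prod.ext (by rw [pb_mul_fst, hf, mul_zero]; rfl)
          (by rw [pb_mul_snd, hs, zero_mul]; rfl))))
      · exact Or.inl (hzI _ (Subtype.ext (Prod.ext (by rw [pb_mul_fst, hf, mul_zero]; rfl)
          (by rw [pb_mul_snd, hs, mul_zero]; rfl))))
      · exact Or.inr (Or.inr (hzR _ (Subtype.ext (Prod.ext (by rw [pb_mul_fst, hf, zero_mul]; rfl)
          (by rw [pb_mul_snd, hs, mul_zero]; rfl)))))
      · exact Or.inr (Or.inl (hzR _ (Subtype.ext (Prod.ext (by rw [pb_mul_fst, hf, mul_zero]; rfl)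
          (by rw [pb_mul_snd, hs, zero_mul]; rfl)))))
      · exact Or.inr (Or.inr (hzR _ (Subtype.ext (Prod.ext (by rw [pb_mul_fst, hf, mul_zero]; rfl)
          (by rw [pb_mul_snd, hs, zero_mul]; rfl)))))
      · exact Or.inr (Or.inl (hzR _ (Subtype.ext (Prod.ext (by rw [pb_mul_fst, hf, mul_zero]; rfl)
          (by rw [pb_mul_snd, hs, mul_zero]; rfl)))))
    · push_neg at hB
      obtain ⟨z, hz, hz2⟩ := hB
      obtain ⟨p₂, π₂, hp₂, hπ⟩ := exists_pi2 (v₁ := v₁) hk₂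
      obtain ⟨e, he, hmem⟩ := exists_pow_pi2_mem hv₁ hp₂ hπ hz hz2
      have hrad : pbIdeal v₁ v₂ ⊥ (IsLocalRing.maximalIdeal R₂) ≤ I.radical := by
        rw [P2_eq_span hv₁ hp₂ hπ]; exact span_le_radical hmem
      have h1 : (a : R₁ × R₂).1 * (b : R₁ × R₂).1 * (c : R₁ × R₂).1 = 0 := hA _ habc
      rcases mul_eq_zero.1 h1 with h | hc1
      · rcases mul_eq_zero.1 h with ha1 | hb1
        · exact Or.inr (Or.inl (hrad (Ideal.mul_mem_right _ _ (mem_P2_of_fst_zero hk₂ ha1))))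
        · exact Or.inr (Or.inr (hrad (Ideal.mul_mem_right _ _ (mem_P2_of_fst_zero hk₂ hb1))))
      · exact Or.inr (Or.inl (hrad (Ideal.mul_mem_left _ _ (mem_P2_of_fst_zero hk₂ hc1))))
  · push_neg at hA
    obtain ⟨w, hw, hw1⟩ := hA
    by_cases hB : ∀ z ∈ I, (z : R₁ × R₂).2 = 0
    · obtain ⟨p₁, π₁, hp₁, hπ⟩ := exists_pi1 (v₂ := v₂) hk₁
      obtain ⟨e, he, hmem⟩ := exists_pow_pi1_mem hv₂ hp₁ hπ hw hw1
      have hrad : pbIdeal v₁ v₂ (IsLocalRing.maximalIdeal R₁) ⊥ ≤ I.radical := by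
        rw [P1_eq_span hv₂ hp₁ hπ]; exact span_le_radical hmem
      have h2 : (a : R₁ × R₂).2 * (b : R₁ × R₂).2 * (c : R₁ × R₂).2 = 0 := hB _ habc
      rcases mul_eq_zero.1 h2 with h | hc2
      · rcases mul_eq_zero.1 h with ha2 | hb2
        · exact Or.inr (Or.inl (hrad (Ideal.mul_mem_right _ _ (mem_P1_of_snd_zero hk₁ ha2))))
        · exact Or.inr (Or.inr (hrad (Ideal.mul_mem_right _ _ (mem_P1_of_snd_zero hk₁ hb2))))
      · exact Or.inr (Or.inl (hrad (Ideal.mul_mem_left _ _ (mem_P1_of_snd_zero hk₁ hc2))))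
    · push_neg at hB
      obtain ⟨z, hz, hz2⟩ := hB
      obtain ⟨p₁, π₁, hp₁, hπ₁⟩ := exists_pi1 (v₂ := v₂) hk₁
      obtain ⟨p₂, π₂, hp₂, hπ₂⟩ := exists_pi2 (v₁ := v₁) hk₂
      obtain ⟨e₁, he₁, hmem₁⟩ := exists_pow_pi1_mem hv₂ hp₁ hπ₁ hw hw1
      obtain ⟨e₂, he₂, hmem₂⟩ := exists_pow_pi2_mem hv₁ hp₂ hπ₂ hz hz2
      have hrad : pbIdeal v₁ v₂ (IsLocalRing.maximalIdeal R₁) (IsLocalRing.maximalIdeal R₂)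
          ≤ I.radical := by
        rw [P_eq_sup hk₁ hk₂]
        refine sup_le ?_ ?_
        · rw [P1_eq_span hv₂ hp₁ hπ₁]; exact span_le_radical hmem₁
        · rw [P2_eq_span hv₁ hp₂ hπ₂]; exact span_le_radical hmem₂
      have hP : a ∈ pbIdeal v₁ v₂ (IsLocalRing.maximalIdeal R₁) (IsLocalRing.maximalIdeal R₂) ∨
          b ∈ pbIdeal v₁ v₂ (IsLocalRing.maximalIdeal R₁) (IsLocalRing.maximalIdeal R₂) ∨
          c ∈ pbIdeal v₁ v₂ (IsLocalRing.maximalIdeal R₁) (IsLocalRing.maximalIdeal R₂) := by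
        by_contra h
        push_neg at h
        have hu : IsUnit (a * b * c) :=
          ((isUnit_of_not_mem_P hk₁ hk₂ h.1).mul (isUnit_of_not_mem_P hk₁ hk₂ h.2.1)).mul
            (isUnit_of_not_mem_P hk₁ hk₂ h.2.2)
        exact hI (I.eq_top_of_isUnit_mem habc hu)
      rcases hP with h | h | h
      · exact Or.inr (Or.inl (hrad (Ideal.mul_mem_right _ _ h)))
      · exact Or.inr (Or.inr (hrad (Ideal.mul_mem_right _ _ h)))
      · exact Or.inr (Or.inl (hrad (Ideal.mul_mem_left _ _ h)))

lemma isPAP_of_ne_top (hv₁ : Function.Surjective v₁) (hv₂ : Function.Surjective v₂)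
    (hk₁ : RingHom.ker v₁ = IsLocalRing.maximalIdeal R₁)
    (hk₂ : RingHom.ker v₂ = IsLocalRing.maximalIdeal R₂)
    {W : Type*} [AddCommGroup W] [Module ↥(pullbackRing v₁ v₂) W]
    {N : Submodule ↥(pullbackRing v₁ v₂) W} (hN : N ≠ ⊤) : IsPseudoAbsPrimary N := by
  refine ⟨hN, isTwoAbsPrimary_of_ne_top hv₁ hv₂ hk₁ hk₂ ?_⟩
  intro h
  apply hN
  rw [eq_top_iff]
  intro x _
  have h1 : (1 : ↥(pullbackRing v₁ v₂)) ∈ N.colon ⊤ := h ▸ Submodule.mem_top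
  simpa using (Submodule.mem_colon (N := N)).1 h1 x trivial


lemma tri_cases (hv₁ : Function.Surjective v₁) (hv₂ : Function.Surjective v₂)
    (hk₁ : RingHom.ker v₁ = IsLocalRing.maximalIdeal R₁)
    (hk₂ : RingHom.ker v₂ = IsLocalRing.maximalIdeal R₂)
    {p₁ : R₁} (hp₁ : Irreducible p₁) {π₁ : ↥(pullbackRing v₁ v₂)}
    (hπ₁ : (π₁ : R₁ × R₂) = (p₁, 0))
    {p₂ : R₂} (hp₂ : Irreducible p₂) {π₂ : ↥(pullbackRing v₁ v₂)}
    (hπ₂ : (π₂ : R₁ × R₂) = (0, p₂))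
    (J : Ideal ↥(pullbackRing v₁ v₂)) :
    J ≤ pbIdeal v₁ v₂ (IsLocalRing.maximalIdeal R₁) ⊥ ∨
    J ≤ pbIdeal v₁ v₂ ⊥ (IsLocalRing.maximalIdeal R₂) ∨
    ((∃ e, 1 ≤ e ∧ π₁ ^ e ∈ J) ∧ (∃ e, 1 ≤ e ∧ π₂ ^ e ∈ J)) := by
  by_cases hA : ∀ z ∈ J, (z : R₁ × R₂).1 = 0
  · exact Or.inr (Or.inl fun x hx => mem_P2_of_fst_zero hk₂ (hA x hx))
  · push_neg at hA
    obtain ⟨w, hw, hw1⟩ := hA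
    by_cases hB : ∀ z ∈ J, (z : R₁ × R₂).2 = 0
    · exact Or.inl fun x hx => mem_P1_of_snd_zero hk₁ (hB x hx)
    · push_neg at hB
      obtain ⟨z, hz, hz2⟩ := hB
      exact Or.inr (Or.inr ⟨exists_pow_pi1_mem hv₂ hp₁ hπ₁ hw hw1,
        exists_pow_pi2_mem hv₁ hp₂ hπ₂ hz hz2⟩)

variable {M : Type*} [AddCommGroup M] [Module ↥(pullbackRing v₁ v₂) M]

lemma smul_span_singleton_eq_map (π : ↥(pullbackRing v₁ v₂)) (V : Submodule ↥(pullbackRing v₁ v₂) M) :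
    Ideal.span {π} • V = Submodule.map (LinearMap.lsmul ↥(pullbackRing v₁ v₂) M π) V := by
  apply le_antisymm
  · rw [Submodule.smul_le]
    intro r hr m hm
    obtain ⟨c, rfl⟩ := Ideal.mem_span_singleton'.1 hr
    refine Submodule.mem_map.2 ⟨c • m, Submodule.smul_mem _ _ hm, ?_⟩
    show π • (c • m) = (c * π) • m
    rw [mul_smul]
    exact smul_comm π c m
  · rw [Submodule.map_le_iff_le_comap]
    intro m hm
    exact Submodule.smul_mem_smul (Ideal.mem_span_singleton_self π) hm

lemma ptop_ne_top (hv₁ : Function.Surjective v₁) (hv₂ : Function.Surjective v₂)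
    (hk₁ : RingHom.ker v₁ = IsLocalRing.maximalIdeal R₁)
    (hk₂ : RingHom.ker v₂ = IsLocalRing.maximalIdeal R₂)
    (hM : IsPAPMultiplication ↥(pullbackRing v₁ v₂) M)
    (hns : (pbIdeal v₁ v₂ (IsLocalRing.maximalIdeal R₁) ⊥ •
        (⊤ : Submodule ↥(pullbackRing v₁ v₂) M)) ⊓
      (pbIdeal v₁ v₂ ⊥ (IsLocalRing.maximalIdeal R₂) • ⊤) ≠ ⊥) :
    pbIdeal v₁ v₂ (IsLocalRing.maximalIdeal R₁) (IsLocalRing.maximalIdeal R₂) •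
      (⊤ : Submodule ↥(pullbackRing v₁ v₂) M) ≠ ⊤ := by
  intro Htop
  obtain ⟨p₁, π₁, hp₁, hπ₁⟩ := exists_pi1 (v₂ := v₂) hk₁
  obtain ⟨p₂, π₂, hp₂, hπ₂⟩ := exists_pi2 (v₁ := v₁) hk₂
  set P1 : Ideal ↥(pullbackRing v₁ v₂) := pbIdeal v₁ v₂ (IsLocalRing.maximalIdeal R₁) ⊥ with hP1def
  set P2 : Ideal ↥(pullbackRing v₁ v₂) := pbIdeal v₁ v₂ ⊥ (IsLocalRing.maximalIdeal R₂) with hP2def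
  set A : Submodule ↥(pullbackRing v₁ v₂) M := P1 • ⊤ with hAdef
  set B : Submodule ↥(pullbackRing v₁ v₂) M := P2 • ⊤ with hBdef
  have hP1span : P1 = Ideal.span {π₁} := P1_eq_span hv₂ hp₁ hπ₁
  have hP2span : P2 = Ideal.span {π₂} := P2_eq_span hv₁ hp₂ hπ₂
  have htop : A ⊔ B = ⊤ := by
    rw [hAdef, hBdef, ← Submodule.sup_smul, ← P_eq_sup hk₁ hk₂]
    exact Htop
  have hP1P2 : P1 * P2 = ⊥ := by
    apply le_antisymm ?_ bot_le
    rw [Ideal.mul_le]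
    intro r hr s hs
    have h1 := (mem_pbIdeal_iff.1 hr).2
    have h2 := (mem_pbIdeal_iff.1 hs).1
    have hz : r * s = 0 := Subtype.ext (Prod.ext
      (by rw [pb_mul_fst, Ideal.mem_bot.1 h2, mul_zero]; rfl)
      (by rw [pb_mul_snd, Ideal.mem_bot.1 h1, zero_mul]; rfl))
    rw [hz]
    exact Ideal.zero_mem ⊥
  have hP1B : P1 • B = ⊥ := by
    rw [hBdef, ← Submodule.smul_assoc, Ideal.smul_eq_mul, hP1P2, Submodule.bot_smul]
  have hP2A : P2 • A = ⊥ := by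
    rw [hAdef, ← Submodule.smul_assoc, Ideal.smul_eq_mul, mul_comm, hP1P2, Submodule.bot_smul]
  have hAdiv : P1 • A = A := by
    have h : P1 • (A ⊔ B) = P1 • A ⊔ P1 • B := Submodule.smul_sup _ _ _
    rw [htop, hP1B, sup_bot_eq, ← hAdef] at h
    exact h.symm
  have hBdiv : P2 • B = B := by
    have h : P2 • (A ⊔ B) = P2 • A ⊔ P2 • B := Submodule.smul_sup _ _ _
    rw [htop, hP2A, bot_sup_eq, ← hBdef] at h
    exact h.symm
  have hApow : ∀ e, 1 ≤ e → P1 ^ e • (⊤ : Submodule ↥(pullbackRing v₁ v₂) M) = A := by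
    intro e he
    induction e with
    | zero => omega
    | succ n ih =>
      rcases Nat.eq_zero_or_pos n with h0 | hn
      · rw [h0, pow_one, ← hAdef]
      · rw [pow_succ, mul_comm, ← Ideal.smul_eq_mul, Submodule.smul_assoc, ih hn]
        exact hAdiv
  have hBpow : ∀ e, 1 ≤ e → P2 ^ e • (⊤ : Submodule ↥(pullbackRing v₁ v₂) M) = B := by
    intro e he
    induction e with
    | zero => omega
    | succ n ih =>
      rcases Nat.eq_zero_or_pos n with h0 | hn
      · rw [h0, pow_one, ← hBdef]
      · rw [pow_succ, mul_comm, ← Ideal.smul_eq_mul, Submodule.smul_assoc, ih hn]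
        exact hBdiv
  set X : Submodule ↥(pullbackRing v₁ v₂) M := A ⊓ B with hXdef
  have hX : X ≠ ⊥ := hns
  have hP1X : P1 • X = ⊥ := le_bot_iff.1 (le_trans
    (Submodule.smul_mono le_rfl inf_le_right) hP1B.le)
  set Soc1 : Submodule ↥(pullbackRing v₁ v₂) M :=
    A ⊓ LinearMap.ker (LinearMap.lsmul ↥(pullbackRing v₁ v₂) M π₁) with hS1def
  set Soc2 : Submodule ↥(pullbackRing v₁ v₂) M :=
    A ⊓ LinearMap.ker (LinearMap.lsmul ↥(pullbackRing v₁ v₂) M (π₁ * π₁)) with hS2def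
  have hP1Soc1 : P1 • Soc1 = ⊥ := by
    rw [hP1span, smul_span_singleton_eq_map]
    apply le_antisymm ?_ bot_le
    rintro x ⟨y, hy, rfl⟩
    exact Submodule.mem_bot _ |>.2 (LinearMap.mem_ker.1 hy.2)
  have hXSoc1 : X ≤ Soc1 := by
    intro x hx
    refine ⟨hx.1, LinearMap.mem_ker.2 ?_⟩
    show π₁ • x = 0
    have : π₁ • x ∈ P1 • B := Submodule.smul_mem_smul (by rw [hP1span]; exact Ideal.mem_span_singleton_self π₁) hx.2
    rw [hP1B] at this
    exact (Submodule.mem_bot _).1 this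
  -- first application
  set N1 : Submodule ↥(pullbackRing v₁ v₂) M := Soc1 ⊔ B with hN1def
  have hN1ne : N1 ≠ ⊤ := by
    intro h
    have hh : P1 • N1 = P1 • Soc1 ⊔ P1 • B := by rw [hN1def]; exact Submodule.smul_sup _ _ _
    rw [h, hP1Soc1, hP1B, sup_bot_eq, ← hAdef] at hh
    exact hX (le_bot_iff.1 (le_trans inf_le_left hh.le))
  obtain ⟨I', hI'⟩ := hM N1 (isPAP_of_ne_top hv₁ hv₂ hk₁ hk₂ hN1ne)
  have hcase1 : ∀ J : Ideal ↥(pullbackRing v₁ v₂), ¬ (N1 = J • ⊤ ∧ J ≤ P1) := by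
    rintro J ⟨hJ, hJ1⟩
    have hBA : B ≤ A := by
      calc B ≤ N1 := le_sup_right
      _ = J • ⊤ := hJ
      _ ≤ P1 • ⊤ := Submodule.smul_mono_left hJ1
      _ = A := hAdef.symm
    have hBX : B ≤ X := le_inf hBA le_rfl
    have : P2 • B ≤ ⊥ := by
      calc P2 • B ≤ P2 • A := Submodule.smul_mono le_rfl hBA
      _ = ⊥ := hP2A
    rw [hBdiv] at this
    apply hX
    rw [hXdef]
    rw [le_bot_iff.1 this]
    exact inf_bot_eq _
  have hcaseboth : ∀ J : Ideal ↥(pullbackRing v₁ v₂), N1 = J • ⊤ →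
      ((∃ e, 1 ≤ e ∧ π₁ ^ e ∈ J) ∧ (∃ e, 1 ≤ e ∧ π₂ ^ e ∈ J)) → False := by
    rintro J hJ ⟨⟨e₁, he₁, hm₁⟩, ⟨e₂, he₂, hm₂⟩⟩
    apply hN1ne
    rw [eq_top_iff, ← htop]
    apply sup_le
    · rw [← hApow e₁ he₁, hJ, hP1span, Ideal.span_singleton_pow]
      exact Submodule.smul_mono_left ((Ideal.span_le).2 (Set.singleton_subset_iff.2 hm₁))
    · rw [← hBpow e₂ he₂, hJ, hP2span, Ideal.span_singleton_pow]
      exact Submodule.smul_mono_left ((Ideal.span_le).2 (Set.singleton_subset_iff.2 hm₂))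
  have hS1X : Soc1 = X := by
    rcases tri_cases hv₁ hv₂ hk₁ hk₂ hp₁ hπ₁ hp₂ hπ₂ I' with h | h | h
    · exact absurd ⟨hI', h⟩ (hcase1 I')
    · apply le_antisymm ?_ hXSoc1
      have hS1B : Soc1 ≤ B := by
        calc Soc1 ≤ N1 := le_sup_left
        _ = I' • ⊤ := hI'
        _ ≤ P2 • ⊤ := Submodule.smul_mono_left h
        _ = B := hBdef.symm
      exact le_inf inf_le_left hS1B
    · exact absurd (hcaseboth I' hI' h) not_false
  -- second application
  have hP1Soc2 : P1 • Soc2 ≤ Soc1 := by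
    rw [hP1span, smul_span_singleton_eq_map]
    rintro x ⟨y, hy, rfl⟩
    constructor
    · show π₁ • y ∈ A
      rw [← hAdiv]
      exact Submodule.smul_mem_smul (by rw [hP1span]; exact Ideal.mem_span_singleton_self π₁) hy.1
    · refine LinearMap.mem_ker.2 ?_
      show π₁ • π₁ • y = 0
      rw [smul_smul]
      exact LinearMap.mem_ker.1 hy.2
  set N2 : Submodule ↥(pullbackRing v₁ v₂) M := Soc2 ⊔ B with hN2def
  have hN2ne : N2 ≠ ⊤ := by
    intro h
    have hh : P1 • N2 = P1 • Soc2 ⊔ P1 • B := by rw [hN2def]; exact Submodule.smul_sup _ _ _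
    rw [h, hP1B, sup_bot_eq, ← hAdef] at hh
    have hAS : A ≤ X := le_trans hh.le (le_trans hP1Soc2 hS1X.le)
    have : A = ⊥ := by
      rw [← hAdiv]
      exact le_bot_iff.1 (le_trans (Submodule.smul_mono le_rfl hAS) hP1X.le)
    apply hX
    rw [hXdef, this]
    exact bot_inf_eq _
  obtain ⟨I'', hI''⟩ := hM N2 (isPAP_of_ne_top hv₁ hv₂ hk₁ hk₂ hN2ne)
  have hcase1' : ∀ J : Ideal ↥(pullbackRing v₁ v₂), ¬ (N2 = J • ⊤ ∧ J ≤ P1) := by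
    rintro J ⟨hJ, hJ1⟩
    have hBA : B ≤ A := by
      calc B ≤ N2 := le_sup_right
      _ = J • ⊤ := hJ
      _ ≤ P1 • ⊤ := Submodule.smul_mono_left hJ1
      _ = A := hAdef.symm
    have : P2 • B ≤ ⊥ := by
      calc P2 • B ≤ P2 • A := Submodule.smul_mono le_rfl hBA
      _ = ⊥ := hP2A
    rw [hBdiv] at this
    apply hX
    rw [hXdef, le_bot_iff.1 this]
    exact inf_bot_eq _
  have hcaseboth' : ∀ J : Ideal ↥(pullbackRing v₁ v₂), N2 = J • ⊤ →
      ((∃ e, 1 ≤ e ∧ π₁ ^ e ∈ J) ∧ (∃ e, 1 ≤ e ∧ π₂ ^ e ∈ J)) → False := by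
    rintro J hJ ⟨⟨e₁, he₁, hm₁⟩, ⟨e₂, he₂, hm₂⟩⟩
    apply hN2ne
    rw [eq_top_iff, ← htop]
    apply sup_le
    · rw [← hApow e₁ he₁, hJ, hP1span, Ideal.span_singleton_pow]
      exact Submodule.smul_mono_left ((Ideal.span_le).2 (Set.singleton_subset_iff.2 hm₁))
    · rw [← hBpow e₂ he₂, hJ, hP2span, Ideal.span_singleton_pow]
      exact Submodule.smul_mono_left ((Ideal.span_le).2 (Set.singleton_subset_iff.2 hm₂))
  have hS2S1 : Soc2 ≤ Soc1 := by
    rcases tri_cases hv₁ hv₂ hk₁ hk₂ hp₁ hπ₁ hp₂ hπ₂ I'' with h | h | h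
    · exact absurd ⟨hI'', h⟩ (hcase1' I'')
    · have hS2B : Soc2 ≤ B := by
        calc Soc2 ≤ N2 := le_sup_left
        _ = I'' • ⊤ := hI''
        _ ≤ P2 • ⊤ := Submodule.smul_mono_left h
        _ = B := hBdef.symm
      exact le_trans (le_inf inf_le_left hS2B) hXSoc1
    · exact absurd (hcaseboth' I'' hI'' h) not_false
  -- final contradiction
  have hSoc1bot : Soc1 ≤ ⊥ := by
    intro x hx
    have hxA : x ∈ A := hx.1
    rw [← hAdiv, hP1span, smul_span_singleton_eq_map] at hxA
    obtain ⟨y, hy, hxy⟩ := hxA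
    have hy2 : y ∈ Soc2 := by
      refine ⟨hy, LinearMap.mem_ker.2 ?_⟩
      show (π₁ * π₁) • y = 0
      rw [← smul_smul]
      show π₁ • ((LinearMap.lsmul ↥(pullbackRing v₁ v₂) M π₁) y) = 0
      rw [hxy]
      exact LinearMap.mem_ker.1 hx.2
    have : π₁ • y = 0 := LinearMap.mem_ker.1 (hS2S1 hy2).2
    rw [Submodule.mem_bot, ← hxy]
    exact this
  exact hX (le_bot_iff.1 (le_trans hXSoc1 hSoc1bot))

end Aux2


/-- Over the pullback R of two DVRs over their common residue field, if
0 → K → S →^φ M → 0 is a separated representation of a non-separated module M,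
then M is a pseudo-absorbing primary multiplication R-module iff S is. -/
theorem stmt_17 {R₁ R₂ k : Type*} [CommRing R₁] [CommRing R₂] [Field k]
    [IsDomain R₁] [IsDomain R₂] [IsDiscreteValuationRing R₁] [IsDiscreteValuationRing R₂]
    (v₁ : R₁ →+* k) (v₂ : R₂ →+* k)
    (hv₁ : Function.Surjective v₁) (hv₂ : Function.Surjective v₂)
    (hk₁ : RingHom.ker v₁ = IsLocalRing.maximalIdeal R₁)
    (hk₂ : RingHom.ker v₂ = IsLocalRing.maximalIdeal R₂)
    {S M : Type*} [AddCommGroup S] [Module (pullbackRing v₁ v₂) S]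
    [AddCommGroup M] [Module (pullbackRing v₁ v₂) M]
    (φ : S →ₗ[pullbackRing v₁ v₂] M) (hφ : Function.Surjective φ)
    -- S is separated: P₁S ∩ P₂S = 0
    (hsep : (pbIdeal v₁ v₂ (IsLocalRing.maximalIdeal R₁) ⊥ •
        (⊤ : Submodule (pullbackRing v₁ v₂) S)) ⊓
      (pbIdeal v₁ v₂ ⊥ (IsLocalRing.maximalIdeal R₂) • ⊤) = ⊥)
    -- K ⊆ PS
    (hKP : LinearMap.ker φ ≤
      pbIdeal v₁ v₂ (IsLocalRing.maximalIdeal R₁) (IsLocalRing.maximalIdeal R₂) •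
        (⊤ : Submodule (pullbackRing v₁ v₂) S))
    -- PK = 0
    (hPK : pbIdeal v₁ v₂ (IsLocalRing.maximalIdeal R₁) (IsLocalRing.maximalIdeal R₂) •
        LinearMap.ker φ = ⊥)
    -- PᵢS ∩ K = 0 for i = 1, 2
    (hK1 : (pbIdeal v₁ v₂ (IsLocalRing.maximalIdeal R₁) ⊥ •
        (⊤ : Submodule (pullbackRing v₁ v₂) S)) ⊓ LinearMap.ker φ = ⊥)
    (hK2 : (pbIdeal v₁ v₂ ⊥ (IsLocalRing.maximalIdeal R₂) •
        (⊤ : Submodule (pullbackRing v₁ v₂) S)) ⊓ LinearMap.ker φ = ⊥)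
    -- M is non-separated: P₁M ∩ P₂M ≠ 0
    (hns : (pbIdeal v₁ v₂ (IsLocalRing.maximalIdeal R₁) ⊥ •
        (⊤ : Submodule (pullbackRing v₁ v₂) M)) ⊓
      (pbIdeal v₁ v₂ ⊥ (IsLocalRing.maximalIdeal R₂) • ⊤) ≠ ⊥) :
    IsPAPMultiplication (pullbackRing v₁ v₂) M ↔
      IsPAPMultiplication (pullbackRing v₁ v₂) S := by
  constructor
  · intro hM
    have hPMne := ptop_ne_top hv₁ hv₂ hk₁ hk₂ hM hns
    have hlt : (pbIdeal v₁ v₂ (IsLocalRing.maximalIdeal R₁) (IsLocalRing.maximalIdeal R₂) •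
        (⊤ : Submodule (pullbackRing v₁ v₂) M)) < ⊤ := lt_top_iff_ne_top.2 hPMne
    obtain ⟨m₀, -, hm₀notP⟩ := SetLike.exists_of_lt hlt
    have hMcyc : Submodule.span (pullbackRing v₁ v₂) {m₀} = ⊤ := by
      by_contra h
      obtain ⟨I, hI⟩ := hM _ (isPAP_of_ne_top hv₁ hv₂ hk₁ hk₂ h)
      by_cases hIt : I = ⊤
      · rw [hI, hIt, Submodule.top_smul] at h
        exact h rfl
      · apply hm₀notP
        have hle : Submodule.span (pullbackRing v₁ v₂) {m₀} ≤
            pbIdeal v₁ v₂ (IsLocalRing.maximalIdeal R₁) (IsLocalRing.maximalIdeal R₂) • ⊤ := by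
          rw [hI]
          exact Submodule.smul_mono_left (ideal_le_P hk₁ hk₂ hIt)
        exact hle (Submodule.mem_span_singleton_self m₀)
    obtain ⟨s₀, hs₀⟩ := hφ m₀
    have hsup : (⊤ : Submodule (pullbackRing v₁ v₂) S) ≤
        Submodule.span (pullbackRing v₁ v₂) {s₀} ⊔ LinearMap.ker φ := by
      intro s _
      have hsm : φ s ∈ Submodule.span (pullbackRing v₁ v₂) {m₀} := by
        rw [hMcyc]; exact Submodule.mem_top
      obtain ⟨r, hr⟩ := Submodule.mem_span_singleton.1 hsm
      refine Submodule.mem_sup.2 ⟨r • s₀,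
        Submodule.smul_mem _ _ (Submodule.mem_span_singleton_self s₀), s - r • s₀, ?_, by abel⟩
      rw [LinearMap.mem_ker, map_sub, map_smul, hs₀, hr, sub_self]
    have hScyc : Submodule.span (pullbackRing v₁ v₂) {s₀} = (⊤ : Submodule (pullbackRing v₁ v₂) S) := by
      have hKle : LinearMap.ker φ ≤ Submodule.span (pullbackRing v₁ v₂) {s₀} := by
        refine le_trans hKP ?_
        calc pbIdeal v₁ v₂ (IsLocalRing.maximalIdeal R₁) (IsLocalRing.maximalIdeal R₂) •
              (⊤ : Submodule (pullbackRing v₁ v₂) S)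
            ≤ pbIdeal v₁ v₂ (IsLocalRing.maximalIdeal R₁) (IsLocalRing.maximalIdeal R₂) •
              (Submodule.span (pullbackRing v₁ v₂) {s₀} ⊔ LinearMap.ker φ) :=
          Submodule.smul_mono le_rfl hsup
        _ = pbIdeal v₁ v₂ (IsLocalRing.maximalIdeal R₁) (IsLocalRing.maximalIdeal R₂) •
              Submodule.span (pullbackRing v₁ v₂) {s₀} ⊔
            pbIdeal v₁ v₂ (IsLocalRing.maximalIdeal R₁) (IsLocalRing.maximalIdeal R₂) •
              LinearMap.ker φ := Submodule.smul_sup _ _ _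
        _ = pbIdeal v₁ v₂ (IsLocalRing.maximalIdeal R₁) (IsLocalRing.maximalIdeal R₂) •
              Submodule.span (pullbackRing v₁ v₂) {s₀} := by rw [hPK, sup_bot_eq]
        _ ≤ Submodule.span (pullbackRing v₁ v₂) {s₀} := Submodule.smul_le_right
      rw [eq_top_iff]
      exact le_trans hsup (sup_le le_rfl hKle)
    intro T _
    refine ⟨Submodule.comap (LinearMap.toSpanSingleton (pullbackRing v₁ v₂) S s₀) T, ?_⟩
    apply le_antisymm
    · intro t ht
      have hts : t ∈ Submodule.span (pullbackRing v₁ v₂) {s₀} := by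
        rw [hScyc]; exact Submodule.mem_top
      obtain ⟨r, hr⟩ := Submodule.mem_span_singleton.1 hts
      have hrJ : r ∈ Submodule.comap (LinearMap.toSpanSingleton (pullbackRing v₁ v₂) S s₀) T := by
        rw [Submodule.mem_comap, LinearMap.toSpanSingleton_apply, hr]
        exact ht
      exact hr ▸ Submodule.smul_mem_smul hrJ Submodule.mem_top
    · rw [Submodule.smul_le]
      intro r hr s _
      have hs : s ∈ Submodule.span (pullbackRing v₁ v₂) {s₀} := by
        rw [hScyc]; exact Submodule.mem_top
      obtain ⟨c, hc⟩ := Submodule.mem_span_singleton.1 hs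
      have heq : r • s = c • (r • s₀) := by
        rw [← hc, smul_smul, smul_smul, mul_comm]
      rw [heq]
      exact T.smul_mem c (by rw [Submodule.mem_comap, LinearMap.toSpanSingleton_apply] at hr; exact hr)
  · intro hS N hN
    have hTne : Submodule.comap φ N ≠ ⊤ := by
      intro h
      apply hN.1
      rw [eq_top_iff]
      intro x _
      obtain ⟨s, rfl⟩ := hφ x
      exact (h ▸ Submodule.mem_top : s ∈ Submodule.comap φ N)
    obtain ⟨J, hJ⟩ := hS _ (isPAP_of_ne_top hv₁ hv₂ hk₁ hk₂ hTne)
    refine ⟨J, ?_⟩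
    have hmap : Submodule.map φ (Submodule.comap φ N) = N := by
      rw [Submodule.map_comap_eq, LinearMap.range_eq_top.2 hφ, top_inf_eq]
    rw [← hmap, hJ, Submodule.map_smul'', Submodule.map_top, LinearMap.range_eq_top.2 hφ]
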